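/- Let C be a bounded closed convex subset of a Hilbert space H and T : C → C a (b, k)-enriched strictly pseudocontractive mapping. Then T has a fixed point in C, and for any x_0 ∈ C and any γ with 0 < γ < 1 − k, the Krasnoselskij iteration x_{n+1} = (1 − γ)x_n + γ T x_n converges weakly to a fixed point of T. -/

import Mathlib

open Filter
open scoped RealInnerProductSpace Topology
set_option maxHeartbeats 1000000

private lemma real_eq_of_forall_close {a b : ℝ} (h : ∀ ε : ℝ, 0 < ε → |a - b| < ε) : a = b := by
  by_contra h'
  exact lt_irrefl _ (h |a - b| (abs_pos.2 (sub_ne_zero.2 h')))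

private lemma exists_weak_cluster {H : Type*} [NormedAddCommGroup H] [InnerProductSpace ℝ H]
    [CompleteSpace H] (R : ℝ) (y : ℕ → H) (hy : ∀ n, ‖y n‖ ≤ R) :
    ∃ p : H, ∀ w : H, ∀ ε : ℝ, 0 < ε → ∃ᶠ n in atTop, |⟪y n, w⟫ - ⟪p, w⟫| < ε := by
  set D := InnerProductSpace.toDual ℝ H with hD
  set ψ : ℕ → WeakDual ℝ H := fun n => StrongDual.toWeakDual (D (y n)) with hψ
  have hK : IsCompact (WeakDual.toStrongDual ⁻¹' Metric.closedBall (0 : StrongDual ℝ H) R) :=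
    WeakDual.isCompact_closedBall (𝕜 := ℝ) (E := H) 0 R
  have hmem : ∀ n, ψ n ∈ WeakDual.toStrongDual ⁻¹' Metric.closedBall (0 : StrongDual ℝ H) R := by
    intro n
    simp only [Set.mem_preimage, Metric.mem_closedBall, dist_zero_right]
    calc ‖WeakDual.toStrongDual (ψ n)‖ = ‖D (y n)‖ := rfl
      _ = ‖y n‖ := (D.norm_map (y n))
      _ ≤ R := hy n
  have hle : Filter.map ψ atTop ≤ Filter.principal _ :=
    Filter.le_principal_iff.2 (Filter.mem_map.2 (Filter.Eventually.of_forall hmem))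
  obtain ⟨φ, _, hφ⟩ := hK.exists_mapClusterPt (u := ψ) hle
  refine ⟨D.symm (WeakDual.toStrongDual φ), fun w ε hε => ?_⟩
  have heval : MapClusterPt (φ w) atTop ((fun g : WeakDual ℝ H => g w) ∘ ψ) :=
    hφ.continuousAt_comp (WeakDual.eval_continuous w).continuousAt
  have hfreq := mapClusterPt_iff_frequently.1 heval (Metric.ball (φ w) ε) (Metric.ball_mem_nhds _ hε)
  refine hfreq.mono fun n hn => ?_
  have h1 : (((fun g : WeakDual ℝ H => g w) ∘ ψ) n) = ⟪y n, w⟫ :=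
    InnerProductSpace.toDual_apply_apply
  have h2 : φ w = ⟪D.symm (WeakDual.toStrongDual φ), w⟫ := by
    rw [← InnerProductSpace.toDual_apply_apply (𝕜 := ℝ), ← hD, D.apply_symm_apply]
    rfl
  rw [Metric.mem_ball, Real.dist_eq, h1, h2] at hn
  exact hn

private lemma weak_cluster_mem {H : Type*} [NormedAddCommGroup H] [InnerProductSpace ℝ H]
    [CompleteSpace H] (C : Set H) (hCc : IsClosed C) (hC : Convex ℝ C)
    (y : ℕ → H) (hy : ∀ n, y n ∈ C) (p : H)
    (hp : ∀ w : H, ∀ ε : ℝ, 0 < ε → ∃ᶠ n in atTop, |⟪y n, w⟫ - ⟪p, w⟫| < ε) :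
    p ∈ C := by
  by_contra hpC
  obtain ⟨f, u, hfu, hup⟩ := geometric_hahn_banach_closed_point hC hCc hpC
  set w := (InnerProductSpace.toDual ℝ H).symm f with hw
  have hfw : ∀ z, f z = ⟪w, z⟫ := by
    intro z
    rw [← InnerProductSpace.toDual_apply_apply (𝕜 := ℝ), hw,
      (InnerProductSpace.toDual ℝ H).apply_symm_apply]
  obtain ⟨n, hn⟩ := (hp w (f p - u) (by linarith)).exists
  have h1 : f (y n) < u := hfu _ (hy n)
  rw [real_inner_comm w (y n), real_inner_comm w p, ← hfw, ← hfw, abs_sub_lt_iff] at hn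
  linarith [hn.2]

private lemma cluster_fixed {H : Type*} [NormedAddCommGroup H] [InnerProductSpace ℝ H]
    [CompleteSpace H] (C : Set H) (R : ℝ) (hR : ∀ z ∈ C, ‖z‖ ≤ R)
    (V : H → H) (hV : ∀ x ∈ C, ∀ z ∈ C, ‖V x - V z‖ ≤ ‖x - z‖)
    (y : ℕ → H) (hy : ∀ n, y n ∈ C)
    (hreg : Tendsto (fun n => ‖y n - V (y n)‖) atTop (𝓝 0))
    (p : H) (hpC : p ∈ C)
    (hp : ∀ w : H, ∀ ε : ℝ, 0 < ε → ∃ᶠ n in atTop, |⟪y n, w⟫ - ⟪p, w⟫| < ε) :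
    V p = p := by
  set w := p - V p with hw
  have hR0 : 0 ≤ R := le_trans (norm_nonneg _) (hR _ (hy 0))
  have hM0 : 0 ≤ R + ‖p‖ := by positivity
  have key : ∀ δ : ℝ, 0 < δ → ‖w‖ ^ 2 ≤ δ ^ 2 + 2 * δ * (R + ‖p‖) + 2 * δ := by
    intro δ hδ
    have hev : ∀ᶠ n in atTop, ‖y n - V (y n)‖ < δ := by
      have := Metric.tendsto_atTop.1 hreg δ hδ
      obtain ⟨N, hN⟩ := this
      refine eventually_atTop.2 ⟨N, fun n hn => ?_⟩
      have := hN n hn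
      rwa [Real.dist_eq, sub_zero, abs_of_nonneg (norm_nonneg _)] at this
    obtain ⟨n, hn1, hn2⟩ := ((hp w δ hδ).and_eventually hev).exists
    have htri : ‖y n - V p‖ ≤ ‖y n - V (y n)‖ + ‖y n - p‖ := by
      calc ‖y n - V p‖ ≤ ‖y n - V (y n)‖ + ‖V (y n) - V p‖ := by
            have : y n - V p = (y n - V (y n)) + (V (y n) - V p) := by abel
            rw [this]; exact norm_add_le _ _
        _ ≤ ‖y n - V (y n)‖ + ‖y n - p‖ := by
            have := hV (y n) (hy n) p hpC
            linarith
    have hnn : ‖y n - p‖ ≤ R + ‖p‖ := by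
      calc ‖y n - p‖ ≤ ‖y n‖ + ‖p‖ := norm_sub_le _ _
        _ ≤ R + ‖p‖ := by linarith [hR _ (hy n)]
    have hexp : ‖y n - V p‖ ^ 2 = ‖y n - p‖ ^ 2 + 2 * ⟪y n - p, w⟫ + ‖w‖ ^ 2 := by
      have h0 : y n - V p = (y n - p) + w := by rw [hw]; abel
      rw [h0, norm_add_sq_real]
    have hsq : ‖y n - V p‖ ^ 2 ≤ (‖y n - V (y n)‖ + ‖y n - p‖) ^ 2 :=
      pow_le_pow_left₀ (norm_nonneg _) htri 2
    have hinner : ⟪y n - p, w⟫ = ⟪y n, w⟫ - ⟪p, w⟫ := by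
      rw [inner_sub_left]
    have habs := abs_lt.1 hn1
    nlinarith [norm_nonneg (y n - V (y n)), norm_nonneg (y n - p), habs.1, habs.2, hn2,
      hnn, hδ.le]
  have hwz : ‖w‖ ^ 2 ≤ 0 := by
    by_contra hcon
    push_neg at hcon
    set A : ℝ := 2 * (R + ‖p‖) + 3 with hA
    have hApos : 0 < A := by positivity
    set δ : ℝ := min 1 (‖w‖ ^ 2 / (2 * A)) with hδdef
    have hδpos : 0 < δ := lt_min one_pos (by positivity)
    have hδ1 : δ ≤ 1 := min_le_left _ _
    have hδ2 : δ ≤ ‖w‖ ^ 2 / (2 * A) := min_le_right _ _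
    have h := key δ hδpos
    have hδsq : δ ^ 2 ≤ δ := by nlinarith
    have : ‖w‖ ^ 2 ≤ δ * A := by nlinarith
    have : δ * A ≤ ‖w‖ ^ 2 / 2 := by
      calc δ * A ≤ ‖w‖ ^ 2 / (2 * A) * A := mul_le_mul_of_nonneg_right hδ2 hApos.le
        _ = ‖w‖ ^ 2 / 2 := by field_simp
    linarith
  have : w = 0 := by
    have : ‖w‖ = 0 := by nlinarith [norm_nonneg w, sq_nonneg ‖w‖]
    exact norm_eq_zero.1 this
  rw [hw] at this
  exact (sub_eq_zero.1 this).symm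

private lemma nonexpansive_fixed_point {H : Type*} [NormedAddCommGroup H] [InnerProductSpace ℝ H]
    [CompleteSpace H] (C : Set H) (hCb : Bornology.IsBounded C)
    (hCc : IsClosed C) (hC : Convex ℝ C) (hCne : C.Nonempty)
    (V : H → H) (hVC : ∀ z ∈ C, V z ∈ C)
    (hV : ∀ x ∈ C, ∀ z ∈ C, ‖V x - V z‖ ≤ ‖x - z‖) :
    ∃ p ∈ C, V p = p := by
  obtain ⟨R, hR⟩ := isBounded_iff_forall_norm_le.1 hCb
  obtain ⟨u, huC⟩ := hCne
  haveI : Nonempty C := ⟨⟨u, huC⟩⟩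
  haveI : CompleteSpace C := hCc.completeSpace_coe
  have hzex : ∀ n : ℕ, ∃ z ∈ C, z = (1 / (n + 2) : ℝ) • u + (1 - 1 / (n + 2) : ℝ) • V z := by
    intro n
    set θ : ℝ := 1 / (n + 2) with hθ
    have hn2 : (0:ℝ) < (n:ℝ) + 2 := by positivity
    have hθ0 : 0 < θ := by positivity
    have hθ1 : θ ≤ 1 / 2 := by
      rw [hθ, div_le_div_iff₀ hn2 two_pos]
      push_cast
      linarith [Nat.cast_nonneg (α := ℝ) n]
    have h1θ : 0 ≤ 1 - θ := by linarith
    set f : C → C := fun z =>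
      ⟨θ • u + (1 - θ) • V z, hC huC (hVC z z.2) hθ0.le h1θ (by ring)⟩ with hf
    have hlip : LipschitzWith ⟨1 - θ, h1θ⟩ f := by
      apply LipschitzWith.of_dist_le_mul
      intro a b
      have hd1 : dist (f a) (f b) =
          ‖θ • u + (1 - θ) • V a - (θ • u + (1 - θ) • V b)‖ := by
        rw [Subtype.dist_eq, dist_eq_norm]
      have hd2 : dist a b = ‖(a : H) - b‖ := by
        rw [Subtype.dist_eq, dist_eq_norm]
      rw [hd1, hd2]; change _ ≤ (1 - θ) * _
      have heq : θ • u + (1 - θ) • V (a : H) - (θ • u + (1 - θ) • V (b : H)) =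
          (1 - θ) • (V (a : H) - V (b : H)) := by
        rw [smul_sub]; abel
      rw [heq, norm_smul, Real.norm_eq_abs, abs_of_nonneg h1θ]
      exact mul_le_mul_of_nonneg_left (hV a a.2 b b.2) h1θ
    have hcontr : ContractingWith ⟨1 - θ, h1θ⟩ f := by
      constructor
      · exact NNReal.coe_lt_coe.1 (by rw [NNReal.coe_one]; change 1 - θ < 1; linarith)
      · exact hlip
    have hz := hcontr.fixedPoint_isFixedPt
    refine ⟨((ContractingWith.fixedPoint f hcontr : C) : H),
      (ContractingWith.fixedPoint f hcontr).2, ?_⟩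
    conv_lhs => rw [← hz]
  choose z hzC hzfix using hzex
  have hreg : Tendsto (fun n => ‖z n - V (z n)‖) atTop (𝓝 0) := by
    have hbound : ∀ n : ℕ, ‖z n - V (z n)‖ ≤ (‖u‖ + R) * (1 / ((n:ℝ) + 1)) := by
      intro n
      have hn2 : (0:ℝ) < (n:ℝ) + 2 := by positivity
      have h1 : z n - V (z n) = (1 / ((n:ℝ) + 2)) • (u - V (z n)) := by
        have h := hzfix n
        rw [smul_sub]
        nth_rewrite 1 [h]
        rw [sub_smul, one_smul]
        abel
      rw [h1, norm_smul, Real.norm_eq_abs, abs_of_pos (by positivity : (0:ℝ) < 1 / ((n:ℝ)+2))]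
      have h2 : ‖u - V (z n)‖ ≤ ‖u‖ + R := by
        calc ‖u - V (z n)‖ ≤ ‖u‖ + ‖V (z n)‖ := norm_sub_le _ _
          _ ≤ ‖u‖ + R := by linarith [hR _ (hVC _ (hzC n))]
      have h3 : (1:ℝ) / ((n:ℝ) + 2) ≤ 1 / ((n:ℝ) + 1) := by
        apply one_div_le_one_div_of_le (by positivity)
        linarith
      have h4 : (0:ℝ) ≤ ‖u‖ + R :=
        le_trans (norm_nonneg _) (by linarith [hR u huC, norm_nonneg u] :
          ‖u‖ ≤ ‖u‖ + R)
      calc 1 / ((n:ℝ) + 2) * ‖u - V (z n)‖ ≤ 1 / ((n:ℝ) + 1) * (‖u‖ + R) := by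
            apply mul_le_mul h3 h2 (norm_nonneg _) (by positivity)
        _ = (‖u‖ + R) * (1 / ((n:ℝ) + 1)) := by ring
    have hlim : Tendsto (fun n : ℕ => (‖u‖ + R) * (1 / ((n:ℝ) + 1))) atTop (𝓝 0) := by
      have := tendsto_one_div_add_atTop_nhds_zero_nat.const_mul (‖u‖ + R)
      simpa using this
    exact squeeze_zero (fun n => norm_nonneg _) hbound hlim
  obtain ⟨p, hp⟩ := exists_weak_cluster R z (fun n => hR _ (hzC n))
  have hpC : p ∈ C := weak_cluster_mem C hCc hC z hzC p hp
  exact ⟨p, hpC, cluster_fixed C R hR V hV z hzC hreg p hpC hp⟩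

theorem enriched_krasnoselskij_weak_convergence
    {H : Type*} [NormedAddCommGroup H] [InnerProductSpace ℝ H] [CompleteSpace H]
    (C : Set H) (hCb : Bornology.IsBounded C) (hCc : IsClosed C) (hC : Convex ℝ C)
    (hCne : C.Nonempty)
    (T : H → H) (hT : Set.MapsTo T C C)
    (b k : ℝ) (hb : 0 ≤ b) (hk0 : 0 ≤ k) (hk1 : k < 1)
    (hespc : ∀ x ∈ C, ∀ y ∈ C,
      ‖b • (x - y) + (T x - T y)‖ ^ 2 ≤
        (b + 1) ^ 2 * ‖x - y‖ ^ 2 + k * ‖x - y - (T x - T y)‖ ^ 2) :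
    (∃ p ∈ C, T p = p) ∧
      ∀ (γ μ t : ℝ), 0 < μ → μ < 1 → 0 < t → t < 1 - k →
        γ = (1 / (b + 1)) * μ * t →
        ∀ (x : ℕ → H), x 0 ∈ C →
          (∀ n, x (n + 1) = (1 - γ) • x n + γ • T (x n)) →
          ∃ q ∈ C, T q = q ∧
            ∀ w : H, Tendsto (fun n => ⟪x n, w⟫) atTop (𝓝 ⟪q, w⟫) := by
  have hb1 : (0:ℝ) < b + 1 := by linarith
  obtain ⟨R, hR⟩ := isBounded_iff_forall_norm_le.1 hCb
  set ρ : ℝ := (1 - k) / (b + 1) with hρdef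
  have hρpos : 0 < ρ := div_pos (by linarith) hb1
  have hρle : ρ ≤ 1 - k := div_le_self (by linarith) (by linarith)
  have hρ1 : ρ ≤ 1 := le_trans hρle (by linarith)
  -- the averaged operator is inverse strongly monotone
  have hmono : ∀ x ∈ C, ∀ y ∈ C,
      (1 - k) * ‖(x - y) - (T x - T y)‖ ^ 2 ≤
        2 * (b + 1) * ⟪x - y, (x - y) - (T x - T y)⟫ := by
    intro x hx y hy
    have h := hespc x hx y hy
    have hrw : b • (x - y) + (T x - T y)
        = (b + 1) • (x - y) - ((x - y) - (T x - T y)) := by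
      module
    rw [hrw, norm_sub_sq_real, real_inner_smul_left, norm_smul, Real.norm_eq_abs,
      abs_of_pos hb1, mul_pow] at h
    have hxy : x - y - (T x - T y) = (x - y) - (T x - T y) := rfl
    linarith
  -- the γ-averaged maps satisfy a strict contraction-type inequality
  have hcontract : ∀ γ : ℝ, 0 < γ → ∀ x ∈ C, ∀ y ∈ C,
      ‖(x - γ • (x - T x)) - (y - γ • (y - T y))‖ ^ 2 ≤
        ‖x - y‖ ^ 2 - γ * (ρ - γ) * ‖(x - y) - (T x - T y)‖ ^ 2 := by
    intro γ hγ x hx y hy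
    have hrw : (x - γ • (x - T x)) - (y - γ • (y - T y))
        = (x - y) - γ • ((x - y) - (T x - T y)) := by
      module
    rw [hrw, norm_sub_sq_real, real_inner_smul_right, norm_smul, Real.norm_eq_abs,
      abs_of_pos hγ, mul_pow]
    have hm := hmono x hx y hy
    have hρu : ρ * ‖(x - y) - (T x - T y)‖ ^ 2 ≤ 2 * ⟪x - y, (x - y) - (T x - T y)⟫ := by
      rw [hρdef, div_mul_eq_mul_div, div_le_iff₀ hb1]
      nlinarith
    nlinarith [mul_le_mul_of_nonneg_left hρu hγ.le]
  have hnonexp : ∀ γ : ℝ, 0 < γ → γ ≤ ρ → ∀ x ∈ C, ∀ y ∈ C,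
      ‖(x - γ • (x - T x)) - (y - γ • (y - T y))‖ ≤ ‖x - y‖ := by
    intro γ hγ0 hγρ x hx y hy
    have h := hcontract γ hγ0 x hx y hy
    have hc : 0 ≤ γ * (ρ - γ) * ‖(x - y) - (T x - T y)‖ ^ 2 :=
      mul_nonneg (mul_nonneg hγ0.le (by linarith)) (sq_nonneg _)
    exact (pow_le_pow_iff_left₀ (norm_nonneg _) (norm_nonneg _) two_ne_zero).1 (by linarith)
  have hVmem : ∀ γ : ℝ, 0 ≤ γ → γ ≤ 1 → ∀ z ∈ C, z - γ • (z - T z) ∈ C := by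
    intro γ h0 h1 z hz
    have heq : z - γ • (z - T z) = (1 - γ) • z + γ • T z := by module
    rw [heq]
    exact hC hz (hT hz) (by linarith) h0 (by ring)
  -- Part 1: existence of a fixed point
  have hhalf0 : 0 < ρ / 2 := by linarith
  have hhalfρ : ρ / 2 ≤ ρ := by linarith
  have hhalf1 : ρ / 2 ≤ 1 := by linarith
  obtain ⟨p₀, hp₀C, hp₀fix⟩ := nonexpansive_fixed_point C hCb hCc hC hCne
    (fun z => z - (ρ / 2) • (z - T z))
    (fun z hz => hVmem (ρ / 2) hhalf0.le hhalf1 z hz)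
    (fun a ha c hc => hnonexp (ρ / 2) hhalf0 hhalfρ a ha c hc)
  have hfixT : ∀ γ : ℝ, 0 < γ → ∀ z, z - γ • (z - T z) = z → T z = z := by
    intro γ hγ0 z hz
    have h2 : γ • (z - T z) = 0 := sub_eq_self.1 hz
    rcases smul_eq_zero.1 h2 with h3 | h3
    · exact absurd h3 (ne_of_gt hγ0)
    · exact (sub_eq_zero.1 h3).symm
  have hTp₀ : T p₀ = p₀ := hfixT (ρ / 2) hhalf0 p₀ hp₀fix
  refine ⟨⟨p₀, hp₀C, hTp₀⟩, ?_⟩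
  -- Part 2: weak convergence of the Krasnoselskij iteration
  intro γ μ t hμ0 hμ1 ht0 ht1 hγeq x hx0 hrec
  have hγ0 : 0 < γ := by
    rw [hγeq]
    exact mul_pos (mul_pos (one_div_pos.2 hb1) hμ0) ht0
  have hμt : μ * t < 1 - k := lt_trans (by nlinarith) ht1
  have hγρ : γ < ρ := by
    have heq : γ = (μ * t) / (b + 1) := by rw [hγeq]; ring
    rw [heq, hρdef, div_lt_div_iff₀ hb1 hb1]
    nlinarith
  have hγ1 : γ < 1 := lt_of_lt_of_le hγρ hρ1
  set V : H → H := fun z => z - γ • (z - T z) with hV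
  have hVrec : ∀ n, x (n + 1) = V (x n) := by
    intro n
    rw [hrec n]
    show (1 - γ) • x n + γ • T (x n) = x n - γ • (x n - T (x n))
    module
  have hxC : ∀ n, x n ∈ C := by
    intro n
    induction n with
    | zero => exact hx0
    | succ m ih => rw [hVrec m]; exact hVmem γ hγ0.le hγ1.le _ ih
  have hdec : ∀ q ∈ C, T q = q → ∀ n,
      ‖x (n + 1) - q‖ ^ 2 ≤ ‖x n - q‖ ^ 2 - γ * (ρ - γ) * ‖x n - T (x n)‖ ^ 2 := by
    intro q hqC hq n
    have h := hcontract γ hγ0 (x n) (hxC n) q hqC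
    rw [hq] at h
    have e1 : q - γ • (q - q) = q := by simp
    have e2 : x n - q - (x n - q) = (0:H) := by abel
    rw [e1] at h
    have e3 : (x n - q) - (T (x n) - q) = x n - T (x n) := by abel
    rw [e3] at h
    rw [hVrec n]
    exact h
  have hdconv : ∀ q, q ∈ C → T q = q →
      ∃ L, Tendsto (fun n => ‖x n - q‖ ^ 2) atTop (𝓝 L) := by
    intro q hqC hq
    have hanti : Antitone fun n => ‖x n - q‖ ^ 2 := by
      apply antitone_nat_of_succ_le
      intro n
      have h := hdec q hqC hq n
      nlinarith [mul_nonneg (mul_nonneg hγ0.le (by linarith : (0:ℝ) ≤ ρ - γ))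
        (sq_nonneg ‖x n - T (x n)‖)]
    have hbdd : BddBelow (Set.range fun n => ‖x n - q‖ ^ 2) :=
      ⟨0, by rintro _ ⟨n, rfl⟩; positivity⟩
    exact ⟨_, tendsto_atTop_ciInf hanti hbdd⟩
  obtain ⟨L₀, hL₀⟩ := hdconv p₀ hp₀C hTp₀
  have hcγ : 0 < γ * (ρ - γ) := mul_pos hγ0 (by linarith)
  have hregT : Tendsto (fun n => ‖x n - T (x n)‖) atTop (𝓝 0) := by
    have hsq : Tendsto (fun n => ‖x n - T (x n)‖ ^ 2) atTop (𝓝 0) := by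
      have hdiff : Tendsto (fun n => ‖x n - p₀‖ ^ 2 - ‖x (n + 1) - p₀‖ ^ 2) atTop (𝓝 0) := by
        have h2 : Tendsto (fun n => ‖x (n + 1) - p₀‖ ^ 2) atTop (𝓝 L₀) :=
          hL₀.comp (tendsto_add_atTop_nat 1)
        simpa using hL₀.sub h2
      apply squeeze_zero (fun n => sq_nonneg _)
        (g := fun n => (‖x n - p₀‖ ^ 2 - ‖x (n + 1) - p₀‖ ^ 2) / (γ * (ρ - γ)))
      · intro n
        rw [le_div_iff₀ hcγ]
        have h := hdec p₀ hp₀C hTp₀ n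
        nlinarith
      · simpa using hdiff.div_const (γ * (ρ - γ))
    have h3 : Tendsto (fun n => Real.sqrt (‖x n - T (x n)‖ ^ 2)) atTop (𝓝 (Real.sqrt 0)) :=
      (Real.continuous_sqrt.tendsto 0).comp hsq
    rw [Real.sqrt_zero] at h3
    exact h3.congr fun n => Real.sqrt_sq (norm_nonneg _)
  have hregV : Tendsto (fun n => ‖x n - V (x n)‖) atTop (𝓝 0) := by
    have hnorm : ∀ n, ‖x n - V (x n)‖ = γ * ‖x n - T (x n)‖ := by
      intro n
      have e : x n - V (x n) = γ • (x n - T (x n)) := sub_sub_cancel _ _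
      rw [e, norm_smul, Real.norm_eq_abs, abs_of_pos hγ0]
    have h4 := hregT.const_mul γ
    simp only [mul_zero] at h4
    exact h4.congr fun n => (hnorm n).symm
  have hVnonexp : ∀ a ∈ C, ∀ c' ∈ C, ‖V a - V c'‖ ≤ ‖a - c'‖ :=
    fun a ha c' hc' => hnonexp γ hγ0 hγρ.le a ha c' hc'
  obtain ⟨q, hq⟩ := exists_weak_cluster R x (fun n => hR _ (hxC n))
  have hqC : q ∈ C := weak_cluster_mem C hCc hC x hxC q hq
  have hVq : V q = q := cluster_fixed C R hR V hVnonexp x hxC hregV q hqC hq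
  have hTq : T q = q := hfixT γ hγ0 q hVq
  refine ⟨q, hqC, hTq, ?_⟩
  intro w
  by_contra hcon
  rw [Metric.tendsto_atTop] at hcon
  push_neg at hcon
  obtain ⟨ε, hε, hfreq⟩ := hcon
  obtain ⟨φ, hφmono, hφ⟩ := Filter.extraction_of_frequently_atTop (frequently_atTop.2 hfreq)
  have hwR : ∀ n, ⟪x (φ n), w⟫ ∈ Set.Icc (-(R * ‖w‖ + 1)) (R * ‖w‖ + 1) := by
    intro n
    have h1 : |⟪x (φ n), w⟫| ≤ R * ‖w‖ := by
      calc |⟪x (φ n), w⟫| ≤ ‖x (φ n)‖ * ‖w‖ := abs_real_inner_le_norm _ _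
        _ ≤ R * ‖w‖ := mul_le_mul_of_nonneg_right (hR _ (hxC _)) (norm_nonneg _)
    have h2 := abs_le.1 h1
    exact ⟨by linarith [h2.1], by linarith [h2.2]⟩
  obtain ⟨ℓ, _, ψ, hψmono, hψtend⟩ := isCompact_Icc.tendsto_subseq hwR
  set σ : ℕ → ℕ := φ ∘ ψ with hσ
  have hσmono : StrictMono σ := hφmono.comp hψmono
  have hσat : Tendsto σ atTop atTop := hσmono.tendsto_atTop
  have hytend : Tendsto (fun n => ⟪x (σ n), w⟫) atTop (𝓝 ℓ) := hψtend
  obtain ⟨p, hp⟩ := exists_weak_cluster R (fun n => x (σ n)) (fun n => hR _ (hxC _))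
  have hpC : p ∈ C := weak_cluster_mem C hCc hC _ (fun n => hxC _) p hp
  have hVp : V p = p := cluster_fixed C R hR V hVnonexp _ (fun n => hxC _)
    (hregV.comp hσat) p hpC hp
  have hTp : T p = p := hfixT γ hγ0 p hVp
  have hpfull : ∀ w' : H, ∀ ε' : ℝ, 0 < ε' →
      ∃ᶠ n in atTop, |⟪x n, w'⟫ - ⟪p, w'⟫| < ε' :=
    fun w' ε' hε' => hσat.frequently (hp w' ε' hε')
  have hℓp : ℓ = ⟪p, w⟫ := by
    apply real_eq_of_forall_close
    intro ε' hε'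
    have hev : ∀ᶠ n in atTop, |⟪x (σ n), w⟫ - ℓ| < ε' / 2 := by
      obtain ⟨N, hN⟩ := Metric.tendsto_atTop.1 hytend (ε' / 2) (by linarith)
      exact eventually_atTop.2 ⟨N, fun n hn => by
        have := hN n hn; rwa [Real.dist_eq] at this⟩
    obtain ⟨n, h1, h2⟩ := ((hp w (ε' / 2) (by linarith)).and_eventually hev).exists
    rw [abs_sub_lt_iff]
    exact ⟨by linarith [(abs_sub_lt_iff.1 h1).1, (abs_sub_lt_iff.1 h1).2,
        (abs_sub_lt_iff.1 h2).1, (abs_sub_lt_iff.1 h2).2],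
      by linarith [(abs_sub_lt_iff.1 h1).1, (abs_sub_lt_iff.1 h1).2,
        (abs_sub_lt_iff.1 h2).1, (abs_sub_lt_iff.1 h2).2]⟩
  have hpq : p = q := by
    obtain ⟨Lp, hLp⟩ := hdconv p hpC hTp
    obtain ⟨Lq, hLq⟩ := hdconv q hqC hTq
    set L' : ℝ := (Lq - Lp + ‖p‖ ^ 2 - ‖q‖ ^ 2) / 2 with hL'
    have hinner : Tendsto (fun n => ⟪x n, p - q⟫) atTop (𝓝 L') := by
      have hid : ∀ n, ⟪x n, p - q⟫ =
          (‖x n - q‖ ^ 2 - ‖x n - p‖ ^ 2 + ‖p‖ ^ 2 - ‖q‖ ^ 2) / 2 := by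
        intro n
        have e1 := norm_sub_sq_real (x n) p
        have e2 := norm_sub_sq_real (x n) q
        rw [inner_sub_right]
        linarith
      have h5 : Tendsto (fun n => (‖x n - q‖ ^ 2 - ‖x n - p‖ ^ 2 + ‖p‖ ^ 2 - ‖q‖ ^ 2) / 2)
          atTop (𝓝 L') := by
        rw [hL']
        exact (((hLq.sub hLp).add_const (‖p‖ ^ 2)).sub_const (‖q‖ ^ 2)).div_const 2
      exact h5.congr fun n => (hid n).symm
    have hevL : ∀ ε' : ℝ, 0 < ε' → ∀ᶠ n in atTop, |⟪x n, p - q⟫ - L'| < ε' := by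
      intro ε' hε'
      obtain ⟨N, hN⟩ := Metric.tendsto_atTop.1 hinner ε' hε'
      exact eventually_atTop.2 ⟨N, fun n hn => by
        have := hN n hn; rwa [Real.dist_eq] at this⟩
    have h1 : ⟪p, p - q⟫ = L' := by
      apply real_eq_of_forall_close
      intro ε' hε'
      obtain ⟨n, ha, hb⟩ :=
        ((hpfull (p - q) (ε' / 2) (by linarith)).and_eventually (hevL (ε' / 2) (by linarith))).exists
      rw [abs_sub_lt_iff]
      exact ⟨by linarith [(abs_sub_lt_iff.1 ha).1, (abs_sub_lt_iff.1 ha).2,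
          (abs_sub_lt_iff.1 hb).1, (abs_sub_lt_iff.1 hb).2],
        by linarith [(abs_sub_lt_iff.1 ha).1, (abs_sub_lt_iff.1 ha).2,
          (abs_sub_lt_iff.1 hb).1, (abs_sub_lt_iff.1 hb).2]⟩
    have h2 : ⟪q, p - q⟫ = L' := by
      apply real_eq_of_forall_close
      intro ε' hε'
      obtain ⟨n, ha, hb⟩ :=
        ((hq (p - q) (ε' / 2) (by linarith)).and_eventually (hevL (ε' / 2) (by linarith))).exists
      rw [abs_sub_lt_iff]
      exact ⟨by linarith [(abs_sub_lt_iff.1 ha).1, (abs_sub_lt_iff.1 ha).2,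
          (abs_sub_lt_iff.1 hb).1, (abs_sub_lt_iff.1 hb).2],
        by linarith [(abs_sub_lt_iff.1 ha).1, (abs_sub_lt_iff.1 ha).2,
          (abs_sub_lt_iff.1 hb).1, (abs_sub_lt_iff.1 hb).2]⟩
    have h3 : ⟪p - q, p - q⟫ = (0:ℝ) := by
      rw [inner_sub_left, h1, h2]
      ring
    have h4 : p - q = 0 := by
      exact inner_self_eq_zero.1 h3
    exact sub_eq_zero.1 h4
  rw [hpq] at hℓp
  obtain ⟨N, hN⟩ := Metric.tendsto_atTop.1 hytend ε hε
  have h6 := hφ (ψ N)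
  have h7 := hN N le_rfl
  rw [hℓp] at h7
  exact absurd h7 (not_lt.2 h6)
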